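/- Let X be a non-negative random variable satisfying Pr(X ≥ ε) ≤ exp(−2mε²) for all ε ≥ 0, where m ≥ 2 is an integer (or real with m > 1). Then E[exp(2(m−1)X²)] ≤ m. -/

import Mathlib

open MeasureTheory

/-- If X ≥ 0 satisfies Pr(X ≥ ε) ≤ exp(−2mε²) for all ε ≥ 0 with m > 1,
then E[exp(2(m−1)X²)] ≤ m. -/
theorem exp_moment_of_subgaussian_tail {Ω : Type*} [MeasurableSpace Ω]
    (ℙ : Measure Ω) [IsProbabilityMeasure ℙ]
    (X : Ω → ℝ) (hX : Measurable X) (hX0 : ∀ ω, 0 ≤ X ω)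
    (m : ℝ) (hm : 1 < m)
    (htail : ∀ ε : ℝ, 0 ≤ ε → ℙ {ω | ε ≤ X ω} ≤ ENNReal.ofReal (Real.exp (-2 * m * ε ^ 2))) :
    ∫ ω, Real.exp (2 * (m - 1) * (X ω) ^ 2) ∂ℙ ≤ m := by
  have hm1 : (0:ℝ) < m - 1 := by linarith
  set g : ℝ → ℝ := fun t => 4 * (m - 1) * t * Real.exp (2 * (m - 1) * t ^ 2) with hg
  -- derivative facts
  have hF : ∀ x : ℝ, HasDerivAt (fun x => Real.exp (2 * (m - 1) * x ^ 2)) (g x) x := by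
    intro x
    have h1 : HasDerivAt (fun x : ℝ => 2 * (m - 1) * x ^ 2) (2 * (m - 1) * (2 * x)) x := by
      simpa using (hasDerivAt_pow 2 x).const_mul (2 * (m - 1))
    have := h1.exp
    convert this using 1
    simp [hg]; ring
  have hG : ∀ x : ℝ, HasDerivAt (fun x => -(m - 1) * Real.exp (-2 * x ^ 2))
      (4 * (m - 1) * x * Real.exp (-2 * x ^ 2)) x := by
    intro x
    have h1 : HasDerivAt (fun x : ℝ => -2 * x ^ 2) (-2 * (2 * x)) x := by
      simpa using (hasDerivAt_pow 2 x).const_mul (-2 : ℝ)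
    have := h1.exp.const_mul (-(m - 1))
    exact this.congr_deriv (by ring)
  have g_cont : Continuous g := by
    continuity
  have g_intble : ∀ t > (0:ℝ), IntervalIntegrable g volume 0 t := fun t _ =>
    g_cont.intervalIntegrable 0 t
  have g_nn : ∀ᵐ t ∂(volume.restrict (Set.Ioi (0:ℝ))), 0 ≤ g t := by
    filter_upwards [ae_restrict_mem measurableSet_Ioi] with t ht
    have : (0:ℝ) < t := ht
    have := Real.exp_pos (2 * (m - 1) * t ^ 2)
    positivity
  have hanti : ∀ x : ℝ, ∫ t in (0:ℝ)..x, g t = Real.exp (2 * (m - 1) * x ^ 2) - 1 := by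
    intro x
    rw [intervalIntegral.integral_eq_sub_of_hasDerivAt (fun t _ => hF t)
      (g_cont.intervalIntegrable 0 x)]
    simp
  -- layer cake
  have key := lintegral_comp_eq_lintegral_meas_le_mul ℙ (f := X) (g := g)
    (Filter.Eventually.of_forall hX0) hX.aemeasurable g_intble g_nn
  -- bound the RHS
  have htend : Filter.Tendsto (fun x => -(m - 1) * Real.exp (-2 * x ^ 2)) Filter.atTop (nhds 0) := by
    have h1 : Filter.Tendsto (fun x : ℝ => -2 * x ^ 2) Filter.atTop Filter.atBot := by
      apply Filter.Tendsto.const_mul_atTop_of_neg (by norm_num : (-2:ℝ) < 0)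
      exact Filter.tendsto_pow_atTop (by norm_num)
    have := (Real.tendsto_exp_atBot.comp h1).const_mul (-(m - 1))
    simpa using this
  have h'pos : ∀ x ∈ Set.Ioi (0:ℝ), 0 ≤ 4 * (m - 1) * x * Real.exp (-2 * x ^ 2) := by
    intro x hx
    have : (0:ℝ) < x := hx
    have := Real.exp_pos (-2 * x ^ 2)
    positivity
  have hIoi : ∫ x in Set.Ioi (0:ℝ), 4 * (m - 1) * x * Real.exp (-2 * x ^ 2) = m - 1 := by
    have := integral_Ioi_of_hasDerivAt_of_nonneg' (fun x _ => hG x) h'pos htend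
    simpa using this
  have hIoiInt : IntegrableOn (fun x => 4 * (m - 1) * x * Real.exp (-2 * x ^ 2))
      (Set.Ioi (0:ℝ)) volume :=
    integrableOn_Ioi_deriv_of_nonneg' (fun x _ => hG x) h'pos htend
  have hRHS : ∫⁻ t in Set.Ioi (0:ℝ), ℙ {a | t ≤ X a} * ENNReal.ofReal (g t)
      ≤ ENNReal.ofReal (m - 1) := by
    have step1 : ∫⁻ t in Set.Ioi (0:ℝ), ℙ {a | t ≤ X a} * ENNReal.ofReal (g t)
        ≤ ∫⁻ t in Set.Ioi (0:ℝ), ENNReal.ofReal (4 * (m - 1) * t * Real.exp (-2 * t ^ 2)) := by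
      apply lintegral_mono_ae
      filter_upwards [ae_restrict_mem measurableSet_Ioi] with t ht
      have ht0 : (0:ℝ) < t := ht
      calc ℙ {a | t ≤ X a} * ENNReal.ofReal (g t)
          ≤ ENNReal.ofReal (Real.exp (-2 * m * t ^ 2)) * ENNReal.ofReal (g t) :=
            mul_le_mul_left (htail t ht0.le) _
        _ = ENNReal.ofReal (Real.exp (-2 * m * t ^ 2) * g t) :=
            (ENNReal.ofReal_mul (Real.exp_pos _).le).symm
        _ = ENNReal.ofReal (4 * (m - 1) * t * Real.exp (-2 * t ^ 2)) := by
            congr 1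
            simp only [hg]
            rw [mul_comm (Real.exp _), mul_assoc, ← Real.exp_add]
            ring_nf
    have step2 : ∫⁻ t in Set.Ioi (0:ℝ), ENNReal.ofReal (4 * (m - 1) * t * Real.exp (-2 * t ^ 2))
        = ENNReal.ofReal (m - 1) := by
      rw [← ofReal_integral_eq_lintegral_ofReal hIoiInt
        (by filter_upwards [ae_restrict_mem measurableSet_Ioi] with t ht using h'pos t ht), hIoi]
    exact step1.trans_eq step2
  have keyle : ∫⁻ ω, ENNReal.ofReal (Real.exp (2 * (m - 1) * (X ω) ^ 2) - 1) ∂ℙ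
      ≤ ENNReal.ofReal (m - 1) := by
    calc ∫⁻ ω, ENNReal.ofReal (Real.exp (2 * (m - 1) * (X ω) ^ 2) - 1) ∂ℙ
        = ∫⁻ ω, ENNReal.ofReal (∫ t in (0:ℝ)..(X ω), g t) ∂ℙ := by
          simp_rw [hanti]
      _ = ∫⁻ t in Set.Ioi (0:ℝ), ℙ {a | t ≤ X a} * ENNReal.ofReal (g t) := key
      _ ≤ ENNReal.ofReal (m - 1) := hRHS
  by_cases hint : Integrable (fun ω => Real.exp (2 * (m - 1) * (X ω) ^ 2)) ℙ
  · have hone : ∀ ω, (1:ℝ) ≤ Real.exp (2 * (m - 1) * (X ω) ^ 2) := by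
      intro ω
      exact Real.one_le_exp (by nlinarith [sq_nonneg (X ω), hm1])
    have hi1 : Integrable (fun ω => Real.exp (2 * (m - 1) * (X ω) ^ 2) - 1) ℙ :=
      hint.sub (integrable_const 1)
    have heq : ∫ ω, (Real.exp (2 * (m - 1) * (X ω) ^ 2) - 1) ∂ℙ
        = (∫⁻ ω, ENNReal.ofReal (Real.exp (2 * (m - 1) * (X ω) ^ 2) - 1) ∂ℙ).toReal := by
      apply integral_eq_lintegral_of_nonneg_ae
      · exact Filter.Eventually.of_forall fun ω => by
          simp only [Pi.zero_apply]; linarith [hone ω]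
      · exact hi1.aestronglyMeasurable
    have hle : ∫ ω, (Real.exp (2 * (m - 1) * (X ω) ^ 2) - 1) ∂ℙ ≤ m - 1 := by
      rw [heq]
      calc (∫⁻ ω, ENNReal.ofReal (Real.exp (2 * (m - 1) * (X ω) ^ 2) - 1) ∂ℙ).toReal
          ≤ (ENNReal.ofReal (m - 1)).toReal := ENNReal.toReal_mono ENNReal.ofReal_ne_top keyle
        _ = m - 1 := ENNReal.toReal_ofReal hm1.le
    have hsplit : ∫ ω, (Real.exp (2 * (m - 1) * (X ω) ^ 2) - 1) ∂ℙ
        = (∫ ω, Real.exp (2 * (m - 1) * (X ω) ^ 2) ∂ℙ) - 1 := by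
      rw [integral_sub hint (integrable_const 1)]
      simp
    linarith [hle, hsplit ▸ hle]
  · rw [integral_undef hint]
    linarith
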